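/- Let A be a unital C*-algebra and let τ be a positive tracial linear functional on A (τ(x*x) ≥ 0 and τ(xy) = τ(yx) for all x, y ∈ A). Let ε > 0, let a, v ∈ A with v·|a| = a where |a| = (a*a)^{1/2}, and let p ∈ A be a projection with p ≤ ε^{-2}·a*a. Then ‖(v − 1)p‖_{2,τ} ≤ ε^{-1}·‖a − |a|‖_{2,τ}. -/
import Mathlib


open scoped ComplexOrder

/-- The 2-seminorm `‖x‖_{2,τ} = (τ(x*x))^{1/2}` associated to a positive tracial
linear functional `τ`. -/
noncomputable def norm2 {A : Type*} [NonUnitalRing A] [StarRing A] [Module ℂ A]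
    (τ : A →ₗ[ℂ] ℂ) (x : A) : ℝ :=
  Real.sqrt (τ (star x * x)).re

/-- `cfc Real.sqrt` of a nonneg element squares back. -/
lemma cfc_sqrt_mul_self' {A : Type*} [CStarAlgebra A] [PartialOrder A] [StarOrderedRing A]
    (a : A) (ha : 0 ≤ a) : cfc Real.sqrt a * cfc Real.sqrt a = a := by
  rw [← cfc_mul Real.sqrt Real.sqrt]
  have : cfc (fun x => Real.sqrt x * Real.sqrt x) a = cfc (id : ℝ → ℝ) a :=
    cfc_congr (fun x hx => Real.mul_self_sqrt (spectrum_nonneg_of_nonneg ha hx))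
  rw [this, cfc_id ℝ _]

/-- Let `τ` be a positive tracial linear functional on a unital C*-algebra `A`, let `ε > 0`,
let `a, v ∈ A` with `v·|a| = a` where `|a| = (a*a)^{1/2}`, and let `p` be a projection with
`p ≤ ε⁻²·a*a`.  Then `‖(v - 1)p‖_{2,τ} ≤ ε⁻¹·‖a - |a|‖_{2,τ}`. -/
theorem norm2_partial_isometry_estimate
    {A : Type*} [CStarAlgebra A] [PartialOrder A] [StarOrderedRing A]
    (τ : A →ₗ[ℂ] ℂ)
    (hτpos : ∀ x : A, 0 ≤ τ (star x * x))
    (hτtr : ∀ x y : A, τ (x * y) = τ (y * x))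
    (ε : ℝ) (hε : 0 < ε)
    (a v : A) (hv : v * cfc Real.sqrt (star a * a) = a)
    (p : A) (hpproj : star p = p ∧ p * p = p)
    (hple : p ≤ (ε ^ 2)⁻¹ • (star a * a)) :
    norm2 τ ((v - 1) * p) ≤ ε⁻¹ * norm2 τ (a - cfc Real.sqrt (star a * a)) := by
  obtain ⟨hps, hpp⟩ := hpproj
  set b := cfc Real.sqrt (star a * a) with hbdef
  have hbsa : IsSelfAdjoint b := cfc_predicate _ _
  have hbb : b * b = star a * a := cfc_sqrt_mul_self' _ (star_mul_self_nonneg a)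
  -- key positivity fact: τ (c * d) ≥ 0 for c, d ≥ 0
  have key : ∀ c d : A, 0 ≤ c → 0 ≤ d → 0 ≤ τ (c * d) := by
    intro c d hc hd
    set s := cfc Real.sqrt c with hs
    set t := cfc Real.sqrt d with ht
    have hssa : IsSelfAdjoint s := cfc_predicate _ _
    have htsa : IsSelfAdjoint t := cfc_predicate _ _
    have hss : s * s = c := cfc_sqrt_mul_self' _ hc
    have htt : t * t = d := cfc_sqrt_mul_self' _ hd
    have h1 : c * d = s * (s * (t * t)) := by rw [← hss, ← htt]; noncomm_ring
    have h2 : (s * (t * t)) * s = star (t * s) * (t * s) := by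
      rw [star_mul, hssa.star_eq, htsa.star_eq]; noncomm_ring
    calc (0 : ℂ) ≤ τ (star (t * s) * (t * s)) := hτpos _
      _ = τ (c * d) := by rw [← h2, ← hτtr, ← h1]
  set c := star (v - 1) * (v - 1) with hcdef
  have hc : 0 ≤ c := star_mul_self_nonneg _
  -- LHS² = τ (c * p)
  have h3 : τ (star ((v - 1) * p) * ((v - 1) * p)) = τ (c * p) := by
    have e1 : star ((v - 1) * p) * ((v - 1) * p) = (p * c) * p := by
      rw [star_mul, hps, hcdef]; noncomm_ring
    rw [e1, hτtr (p * c) p, ← mul_assoc, hpp, hτtr p c]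
  -- RHS² = τ (c * (a*a))
  have e2 : a - b = (v - 1) * b := by rw [sub_mul, one_mul, hv]
  have h4 : τ (star (a - b) * (a - b)) = τ (c * (star a * a)) := by
    have e3 : star ((v - 1) * b) * ((v - 1) * b) = (b * c) * b := by
      rw [star_mul, hbsa.star_eq, hcdef]; noncomm_ring
    rw [e2, e3, hτtr (b * c) b, ← mul_assoc, hbb, hτtr _ c]
  -- the inequality between the squares, in ℂ
  have hd : 0 ≤ (ε ^ 2)⁻¹ • (star a * a) - p := sub_nonneg.mpr hple
  have hkey := key c _ hc hd
  have e4 : c * ((ε ^ 2)⁻¹ • (star a * a) - p)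
      = (ε ^ 2)⁻¹ • (c * (star a * a)) - c * p := by
    rw [mul_sub, mul_smul_comm]
  rw [e4] at hkey
  have hle : τ (c * p) ≤ (ε ^ 2)⁻¹ • τ (c * (star a * a)) := by
    rw [map_sub, LinearMap.map_smul_of_tower] at hkey
    exact sub_nonneg.mp hkey
  -- pass to real parts
  have hre : (τ (c * p)).re ≤ (ε ^ 2)⁻¹ * (τ (c * (star a * a))).re := by
    have h := (Complex.le_def.mp hle).1
    rwa [Complex.real_smul, Complex.re_ofReal_mul] at h
  unfold norm2
  rw [h3, h4]
  calc Real.sqrt (τ (c * p)).re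
      ≤ Real.sqrt ((ε ^ 2)⁻¹ * (τ (c * (star a * a))).re) := Real.sqrt_le_sqrt hre
    _ = ε⁻¹ * Real.sqrt (τ (c * (star a * a))).re := by
        rw [Real.sqrt_mul (by positivity), Real.sqrt_inv, Real.sqrt_sq hε.le]
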